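/- arXiv:math/0609523 — 7 statements merged into one kernel-verified Lean document; each statement's English description precedes it below -/
import Mathlib

section
/- Let m ≥ 1 be an integer and put weights w(z₁) = 1, w(z₂) = w(z₃) = w(z₄) = m on the variables of ℂ[z₁,z₂,z₃,z₄]. Suppose f = f₀ + g, where f₀ is weighted homogeneous of weighted degree 2m, the only common zero in ℂ⁴ of the four partial derivatives of f₀ is the origin, and every monomial occurring in g has weighted degree strictly greater than 2m. Then there exists a ℂ-algebra automorphism φ of ℂ[z₁,z₂,z₃,z₄] such that φ(f) = z₁^{2m} + z₂² + z₃² + z₄² + g′, where every monomial occurring in g′ has weighted degree strictly greater than 2m. -/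
open MvPolynomial

noncomputable section SQH

/-! ### Weighted degree infrastructure -/

def sqhW (m : ℕ) : Fin 4 → ℕ := ![1, m, m, m]

def sqhDeg (m : ℕ) (d : Fin 4 →₀ ℕ) : ℕ := d 0 + m * (d 1 + d 2 + d 3)

lemma sqhDeg_add (m : ℕ) (d e : Fin 4 →₀ ℕ) :
    sqhDeg m (d + e) = sqhDeg m d + sqhDeg m e := by
  simp only [sqhDeg, Finsupp.add_apply]
  ring

def WHom (m N : ℕ) (p : MvPolynomial (Fin 4) ℂ) : Prop :=
  ∀ d ∈ p.support, sqhDeg m d = N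

lemma WHom_C (m : ℕ) (c : ℂ) : WHom m 0 (C c) := by
  intro d hd
  rw [C_apply] at hd
  have := support_monomial_subset hd
  simp at this
  subst this
  simp [sqhDeg]

lemma WHom_mul {m N M : ℕ} {p q : MvPolynomial (Fin 4) ℂ}
    (hp : WHom m N p) (hq : WHom m M q) : WHom m (N + M) (p * q) := by
  intro d hd
  obtain ⟨a, ha, b, hb, rfl⟩ := Finset.mem_add.mp (support_mul p q hd)
  rw [sqhDeg_add, hp a ha, hq b hb]

lemma WHom_pow {m N : ℕ} {p : MvPolynomial (Fin 4) ℂ} (hp : WHom m N p) (k : ℕ) :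
    WHom m (k * N) (p ^ k) := by
  induction k with
  | zero => simpa using WHom_C m 1
  | succ n ih =>
      rw [pow_succ, Nat.succ_mul]
      exact WHom_mul ih hp

lemma WHom_monomial (m N : ℕ) (d : Fin 4 →₀ ℕ) (c : ℂ) (h : sqhDeg m d = N) :
    WHom m N (monomial d c) := by
  intro e he
  have := support_monomial_subset he
  simp at this
  subst this; exact h

lemma WHom_sum {m N : ℕ} {ι : Type*} (s : Finset ι) (f : ι → MvPolynomial (Fin 4) ℂ)
    (h : ∀ i ∈ s, WHom m N (f i)) : WHom m N (∑ i ∈ s, f i) := by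
  classical
  induction s using Finset.induction with
  | empty => intro d hd; simp at hd
  | insert a s hnotmem ih =>
      rw [Finset.sum_insert hnotmem]
      intro d hd
      rcases Finset.mem_union.mp (support_add hd) with h1 | h1
      · exact h a (Finset.mem_insert_self a s) d h1
      · exact ih (fun i hi => h i (Finset.mem_insert_of_mem hi)) d h1

lemma WHom_X (m : ℕ) (i : Fin 4) : WHom m (sqhW m i) (X i) := by
  have : (X i : MvPolynomial (Fin 4) ℂ) = monomial (Finsupp.single i 1) 1 := by
    rw [← X_pow_eq_monomial, pow_one]
  rw [this]
  apply WHom_monomial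
  fin_cases i <;> simp [sqhDeg, sqhW, Finsupp.single_apply]

lemma WHom_prod {m : ℕ} {ι : Type*} (s : Finset ι) (f : ι → MvPolynomial (Fin 4) ℂ)
    (n : ι → ℕ) (h : ∀ i ∈ s, WHom m (n i) (f i)) :
    WHom m (∑ i ∈ s, n i) (∏ i ∈ s, f i) := by
  classical
  induction s using Finset.induction with
  | empty => simpa using WHom_C m 1
  | insert a s hnotmem ih =>
      rw [Finset.sum_insert hnotmem, Finset.prod_insert hnotmem]
      exact WHom_mul (h a (Finset.mem_insert_self a s))
        (ih fun i hi => h i (Finset.mem_insert_of_mem hi))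

lemma WHom_aeval_monomial {m : ℕ} (σ : Fin 4 → MvPolynomial (Fin 4) ℂ)
    (hσ : ∀ i, WHom m (sqhW m i) (σ i)) (d : Fin 4 →₀ ℕ) (c : ℂ) :
    WHom m (sqhDeg m d) (aeval σ (monomial d c)) := by
  rw [aeval_monomial, Finsupp.prod_pow, algebraMap_eq]
  have h1 : WHom m (∑ i : Fin 4, d i * sqhW m i) (∏ i : Fin 4, σ i ^ d i) :=
    WHom_prod Finset.univ _ _ (fun i _ => WHom_pow (hσ i) (d i))
  have h2 : (∑ i : Fin 4, d i * sqhW m i) = sqhDeg m d := by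
    rw [Fin.sum_univ_four]
    show d 0 * 1 + d 1 * m + d 2 * m + d 3 * m = d 0 + m * (d 1 + d 2 + d 3)
    ring
  have h3 := WHom_mul (WHom_C m c) h1
  rw [zero_add, h2] at h3
  exact h3

lemma support_aeval_sqhDeg {m : ℕ} (σ : Fin 4 → MvPolynomial (Fin 4) ℂ)
    (hσ : ∀ i, WHom m (sqhW m i) (σ i)) (p : MvPolynomial (Fin 4) ℂ)
    (e : Fin 4 →₀ ℕ) (he : e ∈ (aeval σ p).support) :
    ∃ d ∈ p.support, sqhDeg m e = sqhDeg m d := by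
  classical
  have hrw : aeval σ p = ∑ d ∈ p.support, aeval σ (monomial d (coeff d p)) := by
    conv_lhs => rw [p.as_sum]
    rw [map_sum]
  rw [hrw] at he
  have hsub : ∀ (s : Finset (Fin 4 →₀ ℕ)),
      (∑ d ∈ s, aeval σ (monomial d (coeff d p))).support ⊆
        s.biUnion fun d => (aeval σ (monomial d (coeff d p))).support := by
    intro s
    induction s using Finset.induction with
    | empty => simp
    | insert a s hnotmem ih =>
        rw [Finset.sum_insert hnotmem, Finset.biUnion_insert]
        exact fun x hx => by
          rcases Finset.mem_union.mp (support_add hx) with h1 | h1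
          · exact Finset.mem_union_left _ h1
          · exact Finset.mem_union_right _ (ih h1)
  obtain ⟨d, hd, hed⟩ := Finset.mem_biUnion.mp (hsub _ he)
  exact ⟨d, hd, WHom_aeval_monomial σ hσ d (coeff d p) e hed⟩

/-! ### The monomials `U` and the classification of the support of `f₀` -/

def Umon (m : ℕ) : Fin 4 → MvPolynomial (Fin 4) ℂ := ![X 0 ^ m, X 1, X 2, X 3]

def eemon (m : ℕ) : Fin 4 → (Fin 4 →₀ ℕ) :=
  ![Finsupp.single 0 m, Finsupp.single 1 1, Finsupp.single 2 1, Finsupp.single 3 1]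

lemma Umon_eq_monomial (m : ℕ) (i : Fin 4) : Umon m i = monomial (eemon m i) 1 := by
  fin_cases i <;>
    simp [Umon, eemon, X_pow_eq_monomial, ← X_pow_eq_monomial, pow_one]

lemma Umon_succ (m : ℕ) (j : Fin 3) : Umon m j.succ = X j.succ := by
  fin_cases j <;> rfl

lemma WHom_Umon (m : ℕ) (i : Fin 4) : WHom m m (Umon m i) := by
  rw [Umon_eq_monomial]
  apply WHom_monomial
  fin_cases i <;> simp [sqhDeg, eemon, Finsupp.single_apply]

lemma classify (m : ℕ) (hm : 1 ≤ m) (d : Fin 4 →₀ ℕ)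
    (hd : d 0 + m * (d 1 + d 2 + d 3) = 2 * m) :
    ∃ p : Fin 4 × Fin 4, d = eemon m p.1 + eemon m p.2 := by
  have hs2 : d 1 + d 2 + d 3 ≤ 2 := by
    by_contra hc
    push_neg at hc
    have key : m * 3 ≤ m * (d 1 + d 2 + d 3) := Nat.mul_le_mul_left _ (by omega)
    set t := m * (d 1 + d 2 + d 3)
    omega
  have ext4 : ∀ (e : Fin 4 →₀ ℕ), d 0 = e 0 → d 1 = e 1 → d 2 = e 2 → d 3 = e 3 → d = e := by
    intro e h0 h1 h2 h3
    ext x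
    fin_cases x <;> assumption
  have hcases : (d 1 = 0 ∧ d 2 = 0 ∧ d 3 = 0) ∨ (d 1 = 1 ∧ d 2 = 0 ∧ d 3 = 0)
      ∨ (d 1 = 0 ∧ d 2 = 1 ∧ d 3 = 0) ∨ (d 1 = 0 ∧ d 2 = 0 ∧ d 3 = 1)
      ∨ (d 1 = 2 ∧ d 2 = 0 ∧ d 3 = 0) ∨ (d 1 = 0 ∧ d 2 = 2 ∧ d 3 = 0)
      ∨ (d 1 = 0 ∧ d 2 = 0 ∧ d 3 = 2) ∨ (d 1 = 1 ∧ d 2 = 1 ∧ d 3 = 0)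
      ∨ (d 1 = 1 ∧ d 2 = 0 ∧ d 3 = 1) ∨ (d 1 = 0 ∧ d 2 = 1 ∧ d 3 = 1) := by
    omega
  have pick : ∀ (i j : Fin 4), d = eemon m i + eemon m j →
      ∃ p : Fin 4 × Fin 4, d = eemon m p.1 + eemon m p.2 := fun i j h => ⟨(i, j), h⟩
  rcases hcases with ⟨h1,h2,h3⟩|⟨h1,h2,h3⟩|⟨h1,h2,h3⟩|⟨h1,h2,h3⟩|⟨h1,h2,h3⟩|⟨h1,h2,h3⟩|
    ⟨h1,h2,h3⟩|⟨h1,h2,h3⟩|⟨h1,h2,h3⟩|⟨h1,h2,h3⟩ <;>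
    rw [h1, h2, h3] at hd
  · exact pick 0 0 (ext4 _ (by simp [eemon, Finsupp.single_apply]; omega)
      (by simp [eemon, Finsupp.single_apply]; omega) (by simp [eemon, Finsupp.single_apply]; omega)
      (by simp [eemon, Finsupp.single_apply]; omega))
  · exact pick 0 1 (ext4 _ (by simp [eemon, Finsupp.single_apply]; omega)
      (by simp [eemon, Finsupp.single_apply]; omega) (by simp [eemon, Finsupp.single_apply]; omega)
      (by simp [eemon, Finsupp.single_apply]; omega))
  · exact pick 0 2 (ext4 _ (by simp [eemon, Finsupp.single_apply]; omega)
      (by simp [eemon, Finsupp.single_apply]; omega) (by simp [eemon, Finsupp.single_apply]; omega)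
      (by simp [eemon, Finsupp.single_apply]; omega))
  · exact pick 0 3 (ext4 _ (by simp [eemon, Finsupp.single_apply]; omega)
      (by simp [eemon, Finsupp.single_apply]; omega) (by simp [eemon, Finsupp.single_apply]; omega)
      (by simp [eemon, Finsupp.single_apply]; omega))
  · exact pick 1 1 (ext4 _ (by simp [eemon, Finsupp.single_apply]; omega)
      (by simp [eemon, Finsupp.single_apply]; omega) (by simp [eemon, Finsupp.single_apply]; omega)
      (by simp [eemon, Finsupp.single_apply]; omega))
  · exact pick 2 2 (ext4 _ (by simp [eemon, Finsupp.single_apply]; omega)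
      (by simp [eemon, Finsupp.single_apply]; omega) (by simp [eemon, Finsupp.single_apply]; omega)
      (by simp [eemon, Finsupp.single_apply]; omega))
  · exact pick 3 3 (ext4 _ (by simp [eemon, Finsupp.single_apply]; omega)
      (by simp [eemon, Finsupp.single_apply]; omega) (by simp [eemon, Finsupp.single_apply]; omega)
      (by simp [eemon, Finsupp.single_apply]; omega))
  · exact pick 1 2 (ext4 _ (by simp [eemon, Finsupp.single_apply]; omega)
      (by simp [eemon, Finsupp.single_apply]; omega) (by simp [eemon, Finsupp.single_apply]; omega)
      (by simp [eemon, Finsupp.single_apply]; omega))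
  · exact pick 1 3 (ext4 _ (by simp [eemon, Finsupp.single_apply]; omega)
      (by simp [eemon, Finsupp.single_apply]; omega) (by simp [eemon, Finsupp.single_apply]; omega)
      (by simp [eemon, Finsupp.single_apply]; omega))
  · exact pick 2 3 (ext4 _ (by simp [eemon, Finsupp.single_apply]; omega)
      (by simp [eemon, Finsupp.single_apply]; omega) (by simp [eemon, Finsupp.single_apply]; omega)
      (by simp [eemon, Finsupp.single_apply]; omega))

lemma decomp (m : ℕ) (hm : 1 ≤ m) (f₀ : MvPolynomial (Fin 4) ℂ)
    (hf₀ : ∀ d ∈ f₀.support, d 0 + m * (d 1 + d 2 + d 3) = 2 * m) :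
    ∃ A : Matrix (Fin 4) (Fin 4) ℂ, A.IsSymm ∧
      f₀ = ∑ i : Fin 4, ∑ j : Fin 4, C (A i j) * Umon m i * Umon m j := by
  classical
  set g : (Fin 4 →₀ ℕ) → Fin 4 × Fin 4 := fun d =>
    if h : ∃ p : Fin 4 × Fin 4, d = eemon m p.1 + eemon m p.2 then h.choose else (0,0) with hg
  have hgd : ∀ d ∈ f₀.support, d = eemon m (g d).1 + eemon m (g d).2 := by
    intro d hd
    have h := classify m hm d (hf₀ d hd)
    rw [hg]
    simp only [dif_pos h]
    exact h.choose_spec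
  set B : Matrix (Fin 4) (Fin 4) ℂ := fun i j =>
    ∑ d ∈ f₀.support.filter (fun d => g d = (i, j)), coeff d f₀ with hB
  have key : f₀ = ∑ i : Fin 4, ∑ j : Fin 4, C (B i j) * Umon m i * Umon m j := by
    rw [← show (∑ p : Fin 4 × Fin 4, C (B p.1 p.2) * Umon m p.1 * Umon m p.2)
        = ∑ i : Fin 4, ∑ j : Fin 4, C (B i j) * Umon m i * Umon m j from
      Fintype.sum_prod_type _]
    have h1 : f₀ = ∑ d ∈ f₀.support, C (coeff d f₀) * Umon m (g d).1 * Umon m (g d).2 := by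
      conv_lhs => rw [f₀.as_sum]
      refine Finset.sum_congr rfl fun d hd => ?_
      rw [Umon_eq_monomial, Umon_eq_monomial, C_mul_monomial, monomial_mul, mul_one, mul_one,
        ← hgd d hd]
    rw [h1, ← Finset.sum_fiberwise_of_maps_to (g := g) (fun d _ => Finset.mem_univ (g d))]
    refine Finset.sum_congr rfl fun p _ => ?_
    rw [hB]
    simp only [map_sum, Finset.sum_mul]
    refine Finset.sum_congr rfl fun d hd => ?_
    rw [(Finset.mem_filter.mp hd).2]
  refine ⟨fun i j => (B i j + B j i) * (2⁻¹ : ℂ), ?_, ?_⟩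
  · ext i j
    show (B j i + B i j) * 2⁻¹ = (B i j + B j i) * 2⁻¹
    ring
  · symm
    have hswap : ∑ i : Fin 4, ∑ j : Fin 4, C (B j i) * Umon m i * Umon m j = f₀ := by
      rw [Finset.sum_comm]
      rw [key]
      refine Finset.sum_congr rfl fun a _ => Finset.sum_congr rfl fun b _ => ?_
      ring
    have expand : ∀ i j : Fin 4, C ((B i j + B j i) * (2⁻¹ : ℂ)) * Umon m i * Umon m j
        = (C (B i j) * Umon m i * Umon m j + C (B j i) * Umon m i * Umon m j) * C (2⁻¹ : ℂ) := by
      intro i j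
      rw [map_mul, map_add]
      ring
    have step1 : ∑ i : Fin 4, ∑ j : Fin 4, C ((B i j + B j i) * (2⁻¹:ℂ)) * Umon m i * Umon m j
        = (∑ i : Fin 4, ∑ j : Fin 4,
            (C (B i j) * Umon m i * Umon m j + C (B j i) * Umon m i * Umon m j)) * C (2⁻¹:ℂ) := by
      rw [Finset.sum_mul]
      refine Finset.sum_congr rfl fun i _ => ?_
      rw [Finset.sum_mul]
      exact Finset.sum_congr rfl fun j _ => expand i j
    have step2 : (∑ i : Fin 4, ∑ j : Fin 4,
        (C (B i j) * Umon m i * Umon m j + C (B j i) * Umon m i * Umon m j))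
        = (∑ i : Fin 4, ∑ j : Fin 4, C (B i j) * Umon m i * Umon m j)
          + ∑ i : Fin 4, ∑ j : Fin 4, C (B j i) * Umon m i * Umon m j :=
      (Finset.sum_congr rfl fun i _ => Finset.sum_add_distrib).trans Finset.sum_add_distrib
    rw [step1, step2, ← key, hswap]
    rw [show (f₀ + f₀) = f₀ * 2 by ring, mul_assoc]
    rw [show (2 : MvPolynomial (Fin 4) ℂ) * C (2⁻¹:ℂ) = 1 from by
      rw [show (2 : MvPolynomial (Fin 4) ℂ) = C 2 from (map_ofNat C 2).symm, ← map_mul]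
      norm_num]
    rw [mul_one]

/-! ### Partial derivatives and nondegeneracy -/

def uvec (m : ℕ) (z : Fin 4 → ℂ) : Fin 4 → ℂ := ![z 0 ^ m, z 1, z 2, z 3]

lemma eval_pderiv_sum (m : ℕ) (A : Matrix (Fin 4) (Fin 4) ℂ) (z : Fin 4 → ℂ) (l : Fin 4) :
    eval z (pderiv l (∑ i : Fin 4, ∑ j : Fin 4, C (A i j) * Umon m i * Umon m j))
      = (if l = 0 then (m:ℂ) * z 0 ^ (m-1) else 1) *
        (∑ k : Fin 4, (A l k + A k l) * uvec m z k) := by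
  have hpd : ∀ (i : Fin 4),
      eval z (pderiv l (Umon m i))
        = (if l = 0 then (m:ℂ) * z 0 ^ (m-1) else 1) * (if l = i then 1 else 0) := by
    intro i
    fin_cases l <;> fin_cases i <;>
      simp [Umon, pderiv_pow, pderiv_X, Pi.single_apply]
  have hev : ∀ (i : Fin 4), eval z (Umon m i) = uvec m z i := by
    intro i; fin_cases i <;> simp [Umon, uvec]
  simp only [map_sum, pderiv_mul, pderiv_C_mul, map_add, eval_mul, eval_C, hpd, hev]
  rw [Fin.sum_univ_four]
  simp only [Fin.sum_univ_four]
  fin_cases l <;> simp <;> ring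

lemma mulVec_inj_of_ker {n : ℕ} (A : Matrix (Fin n) (Fin n) ℂ)
    (h : ∀ v, A.mulVec v = 0 → v = 0) : Function.Injective A.mulVec := by
  intro a b hab
  exact sub_eq_zero.mp (h _ (by rw [Matrix.mulVec_sub, hab, sub_self]))

lemma sum_eq_two_mulVec {A : Matrix (Fin 4) (Fin 4) ℂ} (hA : A.IsSymm) (v : Fin 4 → ℂ)
    (i : Fin 4) : (∑ k : Fin 4, (A i k + A k i) * v k) = 2 * A.mulVec v i := by
  have h1 : ∀ k, (A i k + A k i) * v k = 2 * (A i k * v k) := by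
    intro k; rw [hA.apply]; ring
  rw [Finset.sum_congr rfl fun k _ => h1 k, ← Finset.mul_sum]
  simp [Matrix.mulVec, dotProduct]

lemma Ainj (m : ℕ) (hm : 1 ≤ m) (A : Matrix (Fin 4) (Fin 4) ℂ) (hA : A.IsSymm)
    (f₀ : MvPolynomial (Fin 4) ℂ)
    (hf : f₀ = ∑ i : Fin 4, ∑ j : Fin 4, C (A i j) * Umon m i * Umon m j)
    (hiso : ∀ z : Fin 4 → ℂ, (∀ i : Fin 4, eval z (pderiv i f₀) = 0) → z = 0) :
    Function.Injective A.mulVec := by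
  apply mulVec_inj_of_ker
  intro v hv
  obtain ⟨ρ, hρ⟩ := IsAlgClosed.exists_pow_nat_eq (k := ℂ) (v 0) (by omega : 0 < m)
  set z : Fin 4 → ℂ := ![ρ, v 1, v 2, v 3] with hz
  have hu : uvec m z = v := by
    funext k
    fin_cases k <;> simp [uvec, hz, hρ]
  have hz0 : z = 0 := by
    apply hiso
    intro i
    rw [hf, eval_pderiv_sum, hu, sum_eq_two_mulVec hA, hv]
    simp
  have h0 : ρ = 0 := by
    have := congrFun hz0 0
    simpa [hz] using this
  funext k
  fin_cases k
  · show v 0 = 0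
    rw [← hρ, h0, zero_pow (by omega)]
  · simpa [hz] using congrFun hz0 1
  · simpa [hz] using congrFun hz0 2
  · simpa [hz] using congrFun hz0 3

lemma A3ker (m : ℕ) (hm : 2 ≤ m) (A : Matrix (Fin 4) (Fin 4) ℂ) (hA : A.IsSymm)
    (f₀ : MvPolynomial (Fin 4) ℂ)
    (hf : f₀ = ∑ i : Fin 4, ∑ j : Fin 4, C (A i j) * Umon m i * Umon m j)
    (hiso : ∀ z : Fin 4 → ℂ, (∀ i : Fin 4, eval z (pderiv i f₀) = 0) → z = 0) :
    ∀ w : Fin 3 → ℂ, (A.submatrix Fin.succ Fin.succ).mulVec w = 0 → w = 0 := by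
  intro w hw
  set z : Fin 4 → ℂ := ![0, w 0, w 1, w 2] with hz
  have hu : uvec m z = z := by
    funext k
    fin_cases k <;> simp [uvec, hz, zero_pow (by omega : m ≠ 0)]
  have hAz : ∀ j : Fin 3, A.mulVec z j.succ = 0 := by
    intro j
    have := congrFun hw j
    simp only [Matrix.mulVec, dotProduct, Matrix.submatrix_apply, Pi.zero_apply] at this ⊢
    rw [Fin.sum_univ_four]
    rw [Fin.sum_univ_three] at this
    simp only [hz]
    simpa using this
  have hz0 : z = 0 := by
    apply hiso
    intro i
    rw [hf, eval_pderiv_sum, hu]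
    rcases eq_or_ne i 0 with rfl | hi
    · rw [if_pos rfl]
      have : (0:ℂ) ^ (m - 1) = 0 := zero_pow (by omega)
      simp [hz, this]
    · obtain ⟨j, rfl⟩ := Fin.exists_succ_eq.mpr (by simpa using hi)
      rw [if_neg (by simp [Fin.succ_ne_zero])]
      rw [sum_eq_two_mulVec hA z j.succ, hAz j]
      ring
  funext k
  fin_cases k
  · simpa [hz] using congrFun hz0 1
  · simpa [hz] using congrFun hz0 2
  · simpa [hz] using congrFun hz0 3


section MAT
open Matrix

lemma sqh_sum_single (N : ℕ) (a b : Fin N) :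
    (∑ i : Fin N, (Pi.single (M := fun _ => ℂ) a 1 i + Pi.single (M := fun _ => ℂ) b 1 i) *
      (Pi.single (M := fun _ => ℂ) a 1 i + Pi.single (M := fun _ => ℂ) b 1 i)) = if a = b then 4 else 2 := by
  simp only [Pi.single_apply, add_mul, mul_add, ite_mul, mul_ite, one_mul, mul_one,
    mul_zero, zero_mul, Finset.sum_add_distrib]
  by_cases h : a = b <;>
    simp [h, Finset.sum_ite_eq', ite_and, eq_comm] <;> norm_num

lemma sqh_sum_single_one (N : ℕ) (a : Fin N) :
    (∑ i : Fin N, Pi.single (M := fun _ => ℂ) a 1 i * Pi.single (M := fun _ => ℂ) a 1 i) = 1 := by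
  simp [Pi.single_apply, ite_mul, Finset.sum_ite_eq']

lemma sqh_ortho {n : ℕ} (A : Matrix (Fin n) (Fin n) ℂ) (hA : A.IsSymm)
    (hinj : Function.Injective A.mulVec) :
    ∃ c : Fin n → (Fin n → ℂ),
      ∀ j k, dotProduct (c j) (A.mulVec (c k)) = if j = k then 1 else 0 := by
  classical
  set Q : QuadraticForm ℂ (Fin n → ℂ) := A.toQuadraticMap' with hQdef
  have hQapp : ∀ x, Q x = dotProduct x (A.mulVec x) := by
    intro x
    simp [hQdef, Matrix.toQuadraticMap', Matrix.toQuadraticForm', LinearMap.BilinMap.toQuadraticMap_apply,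
      Matrix.toLinearMap₂'_apply, Matrix.mulVec, dotProduct, Finset.mul_sum, mul_comm,
      mul_left_comm]
  have hsymm : ∀ x y : Fin n → ℂ,
      dotProduct x (A.mulVec y) = dotProduct y (A.mulVec x) := by
    intro x y
    simp only [dotProduct, Matrix.mulVec, Finset.mul_sum]
    rw [Finset.sum_comm]
    refine Finset.sum_congr rfl fun i _ => Finset.sum_congr rfl fun j _ => ?_
    have : A j i = A i j := by
      conv_lhs => rw [← hA.eq]
      rfl
    rw [this]; ring
  have hbil : ∀ x y, QuadraticMap.associated (R := ℂ) Q x y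
      = dotProduct x (A.mulVec y) := by
    intro x y
    rw [QuadraticMap.associated_apply]
    have h1 : Q (x + y) = dotProduct x (A.mulVec x) + dotProduct x (A.mulVec y)
        + (dotProduct x (A.mulVec y) + dotProduct y (A.mulVec y)) := by
      rw [hQapp, Matrix.mulVec_add, dotProduct_add, add_dotProduct,
        add_dotProduct, hsymm y x]
    rw [h1, hQapp, hQapp, invOf_smul_eq_iff, two_smul]
    ring
  have hsep : LinearMap.SeparatingLeft (QuadraticMap.associated (R := ℂ) Q) := by
    intro x hx
    have hAx : A.mulVec x = 0 := by
      funext j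
      have := hx (Pi.single j 1)
      rw [hbil, hsymm, Matrix.dotProduct_mulVec] at this
      simpa [Matrix.mulVec, dotProduct, Pi.single_apply, Finset.sum_ite_eq'] using this
    exact hinj (a₁ := x) (a₂ := 0) (by simpa using hAx)
  obtain ⟨F⟩ := QuadraticForm.equivalent_sum_squares Q hsep
  have hnr : Module.finrank ℂ (Fin n → ℂ) = n := Module.finrank_fin_fun ℂ
  have hQE : ∀ y, Q (F.symm y) = ∑ i, y i * y i := by
    intro y
    rw [F.symm.map_app y]
    simp [QuadraticMap.weightedSumSquares_apply]
  refine ⟨fun j => F.symm (Pi.single (Fin.cast hnr.symm j) 1), fun j k => ?_⟩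
  rw [← hbil]
  rw [QuadraticMap.associated_apply, ← map_add, hQE, hQE, hQE]
  simp only [Pi.add_apply]
  rw [sqh_sum_single, sqh_sum_single_one, sqh_sum_single_one]
  have hcast : (Fin.cast hnr.symm j = Fin.cast hnr.symm k) ↔ j = k := by
    constructor
    · intro h; exact Fin.ext (by simpa [Fin.ext_iff] using h)
    · rintro rfl; rfl
  by_cases h : j = k
  · subst h
    rw [if_pos rfl, if_pos rfl, invOf_smul_eq_iff, two_smul]
    norm_num
  · rw [if_neg (fun hc => h (hcast.mp hc)), if_neg h]
    norm_num


lemma dot_symm {n : ℕ} (A : Matrix (Fin n) (Fin n) ℂ) (hA : A.IsSymm) (x y : Fin n → ℂ) :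
    dotProduct x (A.mulVec y) = dotProduct y (A.mulVec x) := by
  simp only [dotProduct, Matrix.mulVec, Finset.mul_sum]
  rw [Finset.sum_comm]
  refine Finset.sum_congr rfl fun i _ => Finset.sum_congr rfl fun j _ => ?_
  rw [hA.apply]
  ring

lemma conj_entry (S A : Matrix (Fin 4) (Fin 4) ℂ) (k l : Fin 4) :
    (Sᵀ * A * S) k l = dotProduct (fun i => S i k) (A.mulVec (fun j => S j l)) := by
  simp only [Matrix.mul_apply, Matrix.transpose_apply, Matrix.mulVec, dotProduct,
    Finset.sum_mul, Finset.mul_sum]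
  rw [Finset.sum_comm]
  refine Finset.sum_congr rfl fun i _ => Finset.sum_congr rfl fun j _ => ?_
  ring



lemma buildS_shape (A : Matrix (Fin 4) (Fin 4) ℂ) (hA : A.IsSymm)
    (hinj : Function.Injective A.mulVec)
    (h3 : ∀ w : Fin 3 → ℂ, (A.submatrix Fin.succ Fin.succ).mulVec w = 0 → w = 0) :
    ∃ S : Matrix (Fin 4) (Fin 4) ℂ, S 0 0 ≠ 0 ∧ (∀ k : Fin 3, S 0 k.succ = 0) ∧
      Sᵀ * A * S = 1 := by
  classical
  set A₃ := A.submatrix (Fin.succ) (Fin.succ) with hA₃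
  have hA3symm : A₃.IsSymm := by
    ext i j
    simp only [hA₃, Matrix.transpose_apply, Matrix.submatrix_apply]
    exact hA.apply _ _
  obtain ⟨c3, hc3⟩ := sqh_ortho A₃ hA3symm (mulVec_inj_of_ker _ h3)
  have hdet : IsUnit A.det :=
    (Matrix.isUnit_iff_isUnit_det A).mp (Matrix.mulVec_injective_iff_isUnit.mp hinj)
  set e₀ : Fin 4 → ℂ := Pi.single 0 1 with he₀
  set v : Fin 4 → ℂ := A⁻¹.mulVec e₀ with hvdef
  have hv : A.mulVec v = e₀ := by
    rw [hvdef, Matrix.mulVec_mulVec, Matrix.mul_nonsing_inv _ hdet, Matrix.one_mulVec]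
  have hv0 : v 0 ≠ 0 := by
    intro h0
    have hw : (fun j : Fin 3 => v j.succ) = 0 := by
      apply h3
      funext j
      have h1 : (A.mulVec v) j.succ = 0 := by
        rw [hv, he₀]
        simp [Pi.single_apply, Fin.succ_ne_zero]
      simp only [Matrix.mulVec, dotProduct] at h1 ⊢
      rw [Fin.sum_univ_succ] at h1
      simp only [h0, mul_zero, zero_add] at h1
      simpa [Matrix.submatrix_apply, hA₃] using h1
    have hveq : v = 0 := by
      funext k
      rcases Fin.eq_zero_or_eq_succ k with rfl | ⟨j, rfl⟩
      · exact h0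
      · exact congrFun hw j
    rw [hveq] at hv
    have := congrFun hv 0
    simp [he₀, Matrix.mulVec_zero] at this
  have hq : dotProduct v (A.mulVec v) = v 0 := by
    rw [hv, he₀]
    simp [dotProduct, Pi.single_apply, Finset.sum_ite_eq']
  obtain ⟨s, hs⟩ := IsAlgClosed.exists_pow_nat_eq (k := ℂ) (v 0) (n := 2) (by omega)
  have hsne : s ≠ 0 := by
    intro h
    rw [h] at hs
    simp at hs
    exact hv0 hs.symm
  set cols : Fin 4 → (Fin 4 → ℂ) :=
    Fin.cons (s⁻¹ • v) (fun j => Fin.cons 0 (c3 j)) with hcols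
  have hxAv : ∀ j : Fin 3, dotProduct (Fin.cons 0 (c3 j) : Fin 4 → ℂ) (A.mulVec v) = 0 := by
    intro j
    rw [hv, he₀]
    simp [dotProduct, Pi.single_apply, Finset.sum_ite_eq']
  have hsub : ∀ j l : Fin 3,
      dotProduct (Fin.cons 0 (c3 j) : Fin 4 → ℂ)
        (A.mulVec (Fin.cons 0 (c3 l) : Fin 4 → ℂ)) = if j = l then 1 else 0 := by
    intro j l
    rw [← hc3 j l]
    simp only [dotProduct, Matrix.mulVec, hA₃, Matrix.submatrix_apply]
    rw [Fin.sum_univ_succ]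
    simp only [Fin.cons_zero, Fin.cons_succ, zero_mul, zero_add]
    refine Finset.sum_congr rfl fun i _ => ?_
    congr 1
    rw [Fin.sum_univ_succ]
    simp [Fin.cons_zero, Fin.cons_succ]
  have key : ∀ k l, dotProduct (cols k) (A.mulVec (cols l)) = if k = l then 1 else 0 := by
    intro k l
    rcases Fin.eq_zero_or_eq_succ k with rfl | ⟨k', rfl⟩ <;>
      rcases Fin.eq_zero_or_eq_succ l with rfl | ⟨l', rfl⟩
    · simp only [hcols, Fin.cons_zero, if_pos rfl]
      rw [Matrix.mulVec_smul, dotProduct_smul, smul_dotProduct, hq]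
      field_simp
      rw [← hs]
      rw [if_pos trivial, smul_eq_mul, smul_eq_mul]
      field_simp
    · simp only [hcols, Fin.cons_zero, Fin.cons_succ]
      rw [smul_dotProduct, dot_symm A hA _ _, hxAv l']
      simp [(Fin.succ_ne_zero l').symm]
    · simp only [hcols, Fin.cons_zero, Fin.cons_succ]
      rw [Matrix.mulVec_smul, dotProduct_smul, hxAv k']
      simp [Fin.succ_ne_zero k']
    · simp only [hcols, Fin.cons_succ]
      rw [hsub k' l']
      by_cases h : k' = l' <;> simp [h, Fin.succ_inj]
  refine ⟨Matrix.of fun i k => cols k i, ?_, ?_, ?_⟩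
  · show cols 0 0 ≠ 0
    simp only [hcols, Fin.cons_zero, Pi.smul_apply, smul_eq_mul]
    exact mul_ne_zero (inv_ne_zero hsne) hv0
  · intro k
    show cols k.succ 0 = 0
    simp [hcols, Fin.cons_succ]
  · ext k l
    rw [conj_entry]
    have h1 : (fun i => (Matrix.of fun i k => cols k i) i k) = cols k := rfl
    have h2 : (fun j => (Matrix.of fun i k => cols k i) j l) = cols l := rfl
    rw [h1, h2, key k l, Matrix.one_apply]

variable {R : Type*} [CommRing R]

lemma phi_right (M S : Matrix (Fin 4) (Fin 4) R) (P U : Fin 4 → MvPolynomial (Fin 4) R) :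
    (∑ i : Fin 4, ∑ j : Fin 4, C (M i j) * P i * (∑ l : Fin 4, C (S j l) * U l))
      = ∑ i : Fin 4, ∑ l : Fin 4, C ((M * S) i l) * P i * U l := by
  refine Finset.sum_congr rfl fun i _ => ?_
  rw [show (∑ j : Fin 4, C (M i j) * P i * (∑ l : Fin 4, C (S j l) * U l))
      = ∑ j : Fin 4, ∑ l : Fin 4, C (M i j) * P i * (C (S j l) * U l) from
    Finset.sum_congr rfl fun j _ => Finset.mul_sum _ _ _]
  rw [Finset.sum_comm]
  refine Finset.sum_congr rfl fun l _ => ?_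
  rw [Matrix.mul_apply, map_sum, Finset.sum_mul, Finset.sum_mul]
  refine Finset.sum_congr rfl fun j _ => ?_
  rw [_root_.map_mul]
  ring

lemma phi_left (M S : Matrix (Fin 4) (Fin 4) R) (U Q : Fin 4 → MvPolynomial (Fin 4) R) :
    (∑ i : Fin 4, ∑ j : Fin 4, C (M i j) * (∑ k : Fin 4, C (S i k) * U k) * Q j)
      = ∑ k : Fin 4, ∑ j : Fin 4, C ((Sᵀ * M) k j) * U k * Q j := by
  have h1 : ∀ i : Fin 4, (∑ j : Fin 4, C (M i j) * (∑ k : Fin 4, C (S i k) * U k) * Q j)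
      = ∑ k : Fin 4, ∑ j : Fin 4, C (M i j) * (C (S i k) * U k) * Q j := by
    intro i
    rw [Finset.sum_comm]
    refine Finset.sum_congr rfl fun j _ => ?_
    rw [mul_comm (C (M i j)) _, Finset.sum_mul, Finset.sum_mul]
    refine Finset.sum_congr rfl fun k _ => ?_
    ring
  rw [Finset.sum_congr rfl fun i _ => h1 i, Finset.sum_comm]
  refine Finset.sum_congr rfl fun k _ => ?_
  rw [Finset.sum_comm]
  refine Finset.sum_congr rfl fun j _ => ?_
  rw [Matrix.mul_apply, map_sum, Finset.sum_mul, Finset.sum_mul]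
  refine Finset.sum_congr rfl fun i _ => ?_
  rw [_root_.map_mul, Matrix.transpose_apply]
  ring

lemma quad_subst (A S : Matrix (Fin 4) (Fin 4) R) (U : Fin 4 → MvPolynomial (Fin 4) R) :
    (∑ i : Fin 4, ∑ j : Fin 4, C (A i j) * (∑ k : Fin 4, C (S i k) * U k)
      * (∑ l : Fin 4, C (S j l) * U l))
      = ∑ k : Fin 4, ∑ l : Fin 4, C ((Sᵀ * A * S) k l) * U k * U l := by
  rw [phi_right A S _ U, phi_left (A * S) S U U, ← Matrix.mul_assoc]

end MAT

section PART3
open Matrix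

lemma lin_comb (B M : Matrix (Fin 4) (Fin 4) ℂ) (U : Fin 4 → MvPolynomial (Fin 4) ℂ) (i : Fin 4) :
    (∑ k : Fin 4, C (B i k) * (∑ l : Fin 4, C (M k l) * U l))
      = ∑ l : Fin 4, C ((B * M) i l) * U l := by
  rw [show (∑ k : Fin 4, C (B i k) * (∑ l : Fin 4, C (M k l) * U l))
      = ∑ k : Fin 4, ∑ l : Fin 4, C (B i k) * (C (M k l) * U l) from
    Finset.sum_congr rfl fun k _ => Finset.mul_sum _ _ _]
  rw [Finset.sum_comm]
  refine Finset.sum_congr rfl fun l _ => ?_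
  rw [Matrix.mul_apply, map_sum, Finset.sum_mul]
  refine Finset.sum_congr rfl fun k _ => ?_
  rw [_root_.map_mul]
  ring

lemma sum_one_U (m : ℕ) (i : Fin 4) :
    (∑ l : Fin 4, C ((1 : Matrix (Fin 4) (Fin 4) ℂ) i l) * Umon m l) = Umon m i := by
  fin_cases i <;>
    simp [Fin.sum_univ_four, Matrix.one_apply]

lemma sum_one_UU (m : ℕ) :
    (∑ k : Fin 4, ∑ l : Fin 4, C ((1 : Matrix (Fin 4) (Fin 4) ℂ) k l) * Umon m k * Umon m l)
      = X 0 ^ (2*m) + X 1 ^ 2 + X 2 ^ 2 + X 3 ^ 2 := by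
  simp [Fin.sum_univ_four, Matrix.one_apply, Umon]
  ring

lemma aeval_CU (σ : Fin 4 → MvPolynomial (Fin 4) ℂ) (c : ℂ) (p : MvPolynomial (Fin 4) ℂ) :
    aeval σ (C c * p) = C c * aeval σ p := by
  rw [_root_.map_mul, aeval_C, algebraMap_eq]

lemma aeval_sum_CU {m : ℕ} (σ : Fin 4 → MvPolynomial (Fin 4) ℂ) (M : Matrix (Fin 4) (Fin 4) ℂ)
    (hU : ∀ k, aeval σ (Umon m k) = ∑ l : Fin 4, C (M k l) * Umon m l)
    (B : Matrix (Fin 4) (Fin 4) ℂ) (i : Fin 4) :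
    aeval σ (∑ k : Fin 4, C (B i k) * Umon m k) = ∑ l : Fin 4, C ((B * M) i l) * Umon m l := by
  rw [map_sum, Finset.sum_congr rfl fun k _ => aeval_CU σ _ _,
    Finset.sum_congr rfl fun k _ => by rw [hU k], lin_comb]

lemma final_assembly (m : ℕ) (hm : 1 ≤ m) (f f₀ g : MvPolynomial (Fin 4) ℂ)
    (hf : f = f₀ + g)
    (hg : ∀ d ∈ g.support, d 0 + m * (d 1 + d 2 + d 3) > 2 * m)
    (A S : Matrix (Fin 4) (Fin 4) ℂ)
    (hAeq : f₀ = ∑ i : Fin 4, ∑ j : Fin 4, C (A i j) * Umon m i * Umon m j)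
    (hS : Sᵀ * A * S = 1)
    (σ τ : Fin 4 → MvPolynomial (Fin 4) ℂ)
    (hUval : ∀ k, aeval σ (Umon m k) = ∑ l : Fin 4, C (S k l) * Umon m l)
    (hc1 : ∀ i, aeval σ (τ i) = X i)
    (hc2 : ∀ i, aeval τ (σ i) = X i)
    (hWH : ∀ i, WHom m (sqhW m i) (σ i)) :
    ∃ φ : MvPolynomial (Fin 4) ℂ ≃ₐ[ℂ] MvPolynomial (Fin 4) ℂ,
      ∃ g' : MvPolynomial (Fin 4) ℂ,
        φ f = X 0 ^ (2 * m) + X 1 ^ 2 + X 2 ^ 2 + X 3 ^ 2 + g' ∧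
        ∀ d ∈ g'.support, d 0 + m * (d 1 + d 2 + d 3) > 2 * m := by
  have hcomp1 : (aeval σ).comp (aeval (R := ℂ) τ) = AlgHom.id ℂ (MvPolynomial (Fin 4) ℂ) :=
    algHom_ext fun i => by rw [AlgHom.comp_apply, aeval_X, hc1 i, AlgHom.id_apply]
  have hcomp2 : (aeval τ).comp (aeval (R := ℂ) σ) = AlgHom.id ℂ (MvPolynomial (Fin 4) ℂ) :=
    algHom_ext fun i => by rw [AlgHom.comp_apply, aeval_X, hc2 i, AlgHom.id_apply]
  refine ⟨AlgEquiv.ofAlgHom (aeval σ) (aeval τ) hcomp1 hcomp2, aeval σ g, ?_, ?_⟩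
  · show aeval σ f = _
    rw [hf, map_add]
    congr 1
    rw [hAeq, map_sum]
    rw [Finset.sum_congr rfl fun i (_ : i ∈ Finset.univ) => map_sum (aeval σ)
      (fun j => C (A i j) * Umon m i * Umon m j) Finset.univ]
    rw [Finset.sum_congr rfl fun i (_ : i ∈ Finset.univ) => Finset.sum_congr rfl
      fun j (_ : j ∈ Finset.univ) => by
        rw [_root_.map_mul, _root_.map_mul, aeval_C, algebraMap_eq, hUval i, hUval j]]
    rw [quad_subst A S (Umon m), hS, sum_one_UU]
  · intro d hd
    obtain ⟨e, he, heq⟩ := support_aeval_sqhDeg σ hWH g d hd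
    show sqhDeg m d > 2 * m
    rw [heq]
    exact hg e he

end PART3

section PART4
open Matrix

set_option maxHeartbeats 1000000 in
theorem semiquasihomogeneous_reduction' (m : ℕ) (hm : 1 ≤ m)
    (f f₀ g : MvPolynomial (Fin 4) ℂ)
    (hf : f = f₀ + g)
    (hf₀ : ∀ d ∈ f₀.support, d 0 + m * (d 1 + d 2 + d 3) = 2 * m)
    (hiso : ∀ z : Fin 4 → ℂ, (∀ i : Fin 4, eval z (pderiv i f₀) = 0) → z = 0)
    (hg : ∀ d ∈ g.support, d 0 + m * (d 1 + d 2 + d 3) > 2 * m) :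
    ∃ φ : MvPolynomial (Fin 4) ℂ ≃ₐ[ℂ] MvPolynomial (Fin 4) ℂ,
      ∃ g' : MvPolynomial (Fin 4) ℂ,
        φ f = X 0 ^ (2 * m) + X 1 ^ 2 + X 2 ^ 2 + X 3 ^ 2 + g' ∧
        ∀ d ∈ g'.support, d 0 + m * (d 1 + d 2 + d 3) > 2 * m := by
  classical
  obtain ⟨A, hAsymm, hAeq⟩ := decomp m hm f₀ hf₀
  have hAinj := Ainj m hm A hAsymm f₀ hAeq hiso
  rcases eq_or_lt_of_le hm with hm1 | hm2
  · -- the case m = 1 : a full linear change of variables is allowed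
    subst hm1
    obtain ⟨c, hc⟩ := sqh_ortho A hAsymm hAinj
    set S : Matrix (Fin 4) (Fin 4) ℂ := Matrix.of fun i k => c k i with hSdef
    have hS : Sᵀ * A * S = 1 := by
      ext k l
      rw [conj_entry]
      exact (hc k l).trans (Matrix.one_apply).symm
    have hdet : IsUnit S.det := by
      have hd := congrArg Matrix.det hS
      rw [Matrix.det_mul, Matrix.det_mul, Matrix.det_transpose, Matrix.det_one] at hd
      exact IsUnit.of_mul_eq_one (a := S.det) (A.det * S.det) (by linear_combination hd)
    set T := S⁻¹ with hTdef
    have hTS : T * S = 1 := Matrix.nonsing_inv_mul _ hdet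
    have hST : S * T = 1 := Matrix.mul_nonsing_inv _ hdet
    set σ : Fin 4 → MvPolynomial (Fin 4) ℂ :=
      fun i => ∑ l : Fin 4, C (S i l) * Umon 1 l with hσ
    set τ : Fin 4 → MvPolynomial (Fin 4) ℂ :=
      fun i => ∑ l : Fin 4, C (T i l) * Umon 1 l with hτ
    have hUσ : ∀ k, aeval σ (Umon 1 k) = ∑ l : Fin 4, C (S k l) * Umon 1 l := by
      intro k
      fin_cases k
      · show aeval σ (X 0 ^ 1) = _
        rw [pow_one, aeval_X]
        rfl
      · show aeval σ (X 1) = _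
        rw [aeval_X]
        rfl
      · show aeval σ (X 2) = _
        rw [aeval_X]
        rfl
      · show aeval σ (X 3) = _
        rw [aeval_X]
        rfl
    have hUτ : ∀ k, aeval τ (Umon 1 k) = ∑ l : Fin 4, C (T k l) * Umon 1 l := by
      intro k
      fin_cases k
      · show aeval τ (X 0 ^ 1) = _
        rw [pow_one, aeval_X]
        rfl
      · show aeval τ (X 1) = _
        rw [aeval_X]
        rfl
      · show aeval τ (X 2) = _
        rw [aeval_X]
        rfl
      · show aeval τ (X 3) = _
        rw [aeval_X]
        rfl
    have hUX : ∀ i : Fin 4, Umon 1 i = X i := by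
      intro i
      fin_cases i
      · exact pow_one _
      · rfl
      · rfl
      · rfl
    have hc1 : ∀ i, aeval σ (τ i) = X i := by
      intro i
      show aeval σ (∑ l : Fin 4, C (T i l) * Umon 1 l) = X i
      rw [aeval_sum_CU σ S hUσ T i, hTS, sum_one_U, hUX]
    have hc2 : ∀ i, aeval τ (σ i) = X i := by
      intro i
      show aeval τ (∑ l : Fin 4, C (S i l) * Umon 1 l) = X i
      rw [aeval_sum_CU τ T hUτ S i, hST, sum_one_U, hUX]
    have hWH : ∀ i, WHom 1 (sqhW 1 i) (σ i) := by
      intro i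
      have h := WHom_sum Finset.univ (fun l => C (S i l) * Umon 1 l)
        (fun l _ => WHom_mul (WHom_C 1 (S i l)) (WHom_Umon 1 l))
      have h2 : sqhW 1 i = 0 + 1 := by fin_cases i <;> rfl
      rw [h2]
      exact h
    exact final_assembly 1 hm f f₀ g hf hg A S hAeq hS σ τ hUσ hc1 hc2 hWH
  · -- the case m ≥ 2
    obtain ⟨S, hS00, hSrow, hS⟩ := buildS_shape A hAsymm hAinj
      (A3ker m (by omega) A hAsymm f₀ hAeq hiso)
    have hdet : IsUnit S.det := by
      have hd := congrArg Matrix.det hS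
      rw [Matrix.det_mul, Matrix.det_mul, Matrix.det_transpose, Matrix.det_one] at hd
      exact IsUnit.of_mul_eq_one (a := S.det) (A.det * S.det) (by linear_combination hd)
    set T := S⁻¹ with hTdef
    have hTS : T * S = 1 := Matrix.nonsing_inv_mul _ hdet
    have hST : S * T = 1 := Matrix.mul_nonsing_inv _ hdet
    have hTrow : ∀ l, T 0 l = (S 0 0)⁻¹ * (1 : Matrix (Fin 4) (Fin 4) ℂ) 0 l := by
      intro l
      have h1 := congrFun (congrFun hST 0) l
      rw [Matrix.mul_apply, Fin.sum_univ_succ] at h1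
      simp only [hSrow, zero_mul, Finset.sum_const_zero, add_zero] at h1
      rw [← h1]
      field_simp
    have hT00 : T 0 0 = (S 0 0)⁻¹ := by
      rw [hTrow 0, Matrix.one_apply_eq, mul_one]
    have hTrow' : ∀ k : Fin 3, T 0 k.succ = 0 := by
      intro k
      rw [hTrow k.succ, Matrix.one_apply_ne (Fin.succ_ne_zero k).symm, mul_zero]
    obtain ⟨α, hα⟩ := IsAlgClosed.exists_pow_nat_eq (k := ℂ) (S 0 0) (by omega : 0 < m)
    have hα0 : α ≠ 0 := by
      intro h
      exact hS00 (by rw [← hα, h, zero_pow (by omega)])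
    set σ : Fin 4 → MvPolynomial (Fin 4) ℂ :=
      fun i => if i = 0 then C α * X 0 else ∑ l : Fin 4, C (S i l) * Umon m l with hσ
    set τ : Fin 4 → MvPolynomial (Fin 4) ℂ :=
      fun i => if i = 0 then C α⁻¹ * X 0 else ∑ l : Fin 4, C (T i l) * Umon m l with hτ
    have hgen : ∀ (β : ℂ) (M : Matrix (Fin 4) (Fin 4) ℂ), β ^ m = M 0 0 →
        (∀ k : Fin 3, M 0 k.succ = 0) →
        ∀ k, aeval (fun i => if i = 0 then C β * X 0
            else ∑ l : Fin 4, C (M i l) * Umon m l) (Umon m k)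
          = ∑ l : Fin 4, C (M k l) * Umon m l := by
      intro β M hβ hrow k
      rcases Fin.eq_zero_or_eq_succ k with rfl | ⟨j, rfl⟩
      · show aeval _ (X 0 ^ m) = _
        rw [map_pow, aeval_X, if_pos rfl, mul_pow, ← C_pow, hβ]
        rw [Fin.sum_univ_succ]
        simp only [hrow, map_zero, zero_mul, Finset.sum_const_zero, add_zero]
        rfl
      · rw [Umon_succ, aeval_X, if_neg (Fin.succ_ne_zero j)]
    have hUσ : ∀ k, aeval σ (Umon m k) = ∑ l : Fin 4, C (S k l) * Umon m l :=
      hgen α S hα hSrow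
    have hUτ : ∀ k, aeval τ (Umon m k) = ∑ l : Fin 4, C (T k l) * Umon m l :=
      hgen α⁻¹ T (by rw [inv_pow, hα, hT00]) hTrow'
    have hc1 : ∀ i, aeval σ (τ i) = X i := by
      intro i
      rcases Fin.eq_zero_or_eq_succ i with rfl | ⟨j, rfl⟩
      · show aeval σ (if (0:Fin 4) = 0 then C α⁻¹ * X 0 else _) = X 0
        rw [if_pos rfl, aeval_CU, aeval_X]
        show C α⁻¹ * (if (0:Fin 4) = 0 then C α * X 0 else _) = X 0
        rw [if_pos rfl, ← mul_assoc, ← _root_.map_mul, inv_mul_cancel₀ hα0, C.map_one, one_mul]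
      · show aeval σ (if j.succ = 0 then _ else ∑ l : Fin 4, C (T j.succ l) * Umon m l) = _
        rw [if_neg (Fin.succ_ne_zero j), aeval_sum_CU σ S hUσ T j.succ, hTS, sum_one_U,
          Umon_succ]
    have hc2 : ∀ i, aeval τ (σ i) = X i := by
      intro i
      rcases Fin.eq_zero_or_eq_succ i with rfl | ⟨j, rfl⟩
      · show aeval τ (if (0:Fin 4) = 0 then C α * X 0 else _) = X 0
        rw [if_pos rfl, aeval_CU, aeval_X]
        show C α * (if (0:Fin 4) = 0 then C α⁻¹ * X 0 else _) = X 0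
        rw [if_pos rfl, ← mul_assoc, ← _root_.map_mul, mul_inv_cancel₀ hα0, C.map_one, one_mul]
      · show aeval τ (if j.succ = 0 then _ else ∑ l : Fin 4, C (S j.succ l) * Umon m l) = _
        rw [if_neg (Fin.succ_ne_zero j), aeval_sum_CU τ T hUτ S j.succ, hST, sum_one_U,
          Umon_succ]
    have hWH : ∀ i, WHom m (sqhW m i) (σ i) := by
      intro i
      rcases Fin.eq_zero_or_eq_succ i with rfl | ⟨j, rfl⟩
      · show WHom m (sqhW m 0) (if (0:Fin 4) = 0 then C α * X 0 else _)
        rw [if_pos rfl]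
        have h := WHom_mul (WHom_C m α) (WHom_X m 0)
        rwa [zero_add] at h
      · show WHom m (sqhW m j.succ) (if j.succ = 0 then _
          else ∑ l : Fin 4, C (S j.succ l) * Umon m l)
        rw [if_neg (Fin.succ_ne_zero j)]
        have h := WHom_sum Finset.univ (fun l => C (S j.succ l) * Umon m l)
          (fun l _ => WHom_mul (WHom_C m (S j.succ l)) (WHom_Umon m l))
        have h2 : sqhW m j.succ = 0 + m := by fin_cases j <;> simp [sqhW]
        rw [h2]
        exact h
    exact final_assembly m hm f f₀ g hf hg A S hAeq hS σ τ hUσ hc1 hc2 hWH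

end PART4

end SQH


/-- Reduction lemma for semiquasihomogeneous polynomials: with weights
`w(z₁) = 1`, `w(z₂) = w(z₃) = w(z₄) = m`, if `f = f₀ + g` where `f₀` is
weighted homogeneous of weighted degree `2m` with an isolated singularity at
the origin and every monomial of `g` has weighted degree `> 2m`, then after a
`ℂ`-algebra automorphism of `ℂ[z₁,z₂,z₃,z₄]` the polynomial becomes
`z₁^{2m} + z₂² + z₃² + z₄²` plus terms of weighted degree `> 2m`. -/
theorem semiquasihomogeneous_reduction (m : ℕ) (hm : 1 ≤ m)
    (f f₀ g : MvPolynomial (Fin 4) ℂ)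
    (hf : f = f₀ + g)
    (hf₀ : ∀ d ∈ f₀.support, d 0 + m * (d 1 + d 2 + d 3) = 2 * m)
    (hiso : ∀ z : Fin 4 → ℂ, (∀ i : Fin 4, eval z (pderiv i f₀) = 0) → z = 0)
    (hg : ∀ d ∈ g.support, d 0 + m * (d 1 + d 2 + d 3) > 2 * m) :
    ∃ φ : MvPolynomial (Fin 4) ℂ ≃ₐ[ℂ] MvPolynomial (Fin 4) ℂ,
      ∃ g' : MvPolynomial (Fin 4) ℂ,
        φ f = X 0 ^ (2 * m) + X 1 ^ 2 + X 2 ^ 2 + X 3 ^ 2 + g' ∧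
        ∀ d ∈ g'.support, d 0 + m * (d 1 + d 2 + d 3) > 2 * m := by
  exact semiquasihomogeneous_reduction' m hm f f₀ g hf hf₀ hiso hg
end

section
/- Let Q be a symmetric 2×2 integer matrix with Q₁₁ = d. Suppose there exist coprime integers m, n such that the row vector (m, n) annihilates Q, i.e. m·Q₁₁ + n·Q₂₁ = 0 and m·Q₁₂ + n·Q₂₂ = 0. Then n² divides d. -/
/-- If `Q` is a symmetric `2 × 2` integer matrix with `Q₁₁ = d` and the row
vector `(m, n)` with `m, n` coprime annihilates `Q`, then `n²` divides `d`. -/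
theorem radical_vector_sq_divides (d m n : ℤ)
    (Q : Matrix (Fin 2) (Fin 2) ℤ) (hsym : Q.IsSymm)
    (h11 : Q 0 0 = d) (hmn : IsCoprime m n)
    (h1 : m * Q 0 0 + n * Q 1 0 = 0)
    (h2 : m * Q 0 1 + n * Q 1 1 = 0) :
    n ^ 2 ∣ d := by
  have hQ01 : Q 0 1 = Q 1 0 := (hsym.apply 0 1).symm
  rcases eq_or_ne n 0 with hn | hn
  · subst hn
    have hm : IsUnit m := isCoprime_zero_right.mp hmn
    have hd : d = 0 := by
      have hmd : m * d = 0 := by rw [← h11]; linarith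
      rcases mul_eq_zero.mp hmd with h | h
      · exact absurd h hm.ne_zero
      · exact h
    simp [hd]
  · have hnd : n ∣ d := by
      have : n ∣ m * d := ⟨-Q 1 0, by rw [← h11]; linarith⟩
      exact hmn.symm.dvd_of_dvd_mul_left this
    obtain ⟨k, hk⟩ := hnd
    have hQ10 : Q 1 0 = -(m * k) := by
      have : n * Q 1 0 = n * (-(m * k)) := by rw [← h11] at hk; linear_combination h1 - m * hk
      exact mul_left_cancel₀ hn this
    have hnk : n ∣ k := by
      have h2' : n * Q 1 1 = m * (m * k) := by rw [hQ01, hQ10] at h2; linear_combination h2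
      have : n ∣ m * (m * k) := ⟨Q 1 1, h2'.symm⟩
      exact hmn.symm.dvd_of_dvd_mul_left (hmn.symm.dvd_of_dvd_mul_left this)
    obtain ⟨j, hj⟩ := hnk
    exact ⟨j, by rw [hk, hj]; ring⟩
end

section
/- Let d be a nonzero square-free integer and let Q be a symmetric 2×2 integer matrix with Q₁₁ = d. Suppose there exist coprime integers m, n such that the row vector (m, n) annihilates Q, i.e. m·Q₁₁ + n·Q₂₁ = 0 and m·Q₁₂ + n·Q₂₂ = 0. Then n = ±1, and there exists an integer matrix U with det U = ±1 such that Uᵀ·Q·U = [[d, 0], [0, 0]]. -/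
/-- If `Q` is a symmetric `2 × 2` integer matrix with `Q₁₁ = d`, `d` nonzero
and square-free, and the row vector `(m, n)` with `m, n` coprime annihilates
`Q`, then `n = ±1` and `Q` is congruent over `ℤ` to `diag(d, 0)`. -/
theorem radical_vector_normalization (d m n : ℤ) (hd : d ≠ 0)
    (hsf : Squarefree d)
    (Q : Matrix (Fin 2) (Fin 2) ℤ) (hsym : Q.IsSymm)
    (h11 : Q 0 0 = d) (hmn : IsCoprime m n)
    (h1 : m * Q 0 0 + n * Q 1 0 = 0)
    (h2 : m * Q 0 1 + n * Q 1 1 = 0) :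
    (n = 1 ∨ n = -1) ∧
      ∃ U : Matrix (Fin 2) (Fin 2) ℤ,
        (U.det = 1 ∨ U.det = -1) ∧ U.transpose * Q * U = !![d, 0; 0, 0] := by
  have hQ10 : Q 1 0 = Q 0 1 := hsym.apply 0 1
  have key : m ^ 2 * d = n ^ 2 * Q 1 1 := by
    linear_combination (-n) * h2 + m * h1 - m * n * hQ10 - m ^ 2 * h11
  have hdvd : n ^ 2 ∣ d := by
    have : n ^ 2 ∣ m ^ 2 * d := ⟨Q 1 1, key⟩
    exact (hmn.symm.pow).dvd_of_dvd_mul_left this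
  have hn : n = 1 ∨ n = -1 := by
    have := hsf n (by rw [← sq]; exact hdvd)
    exact Int.isUnit_iff.mp this
  refine ⟨hn, !![1, m; 0, n], ?_, ?_⟩
  · rw [Matrix.det_fin_two_of]
    rcases hn with h | h <;> simp [h]
  · ext i j
    fin_cases i <;> fin_cases j <;>
      simp [Matrix.mul_apply, Fin.sum_univ_succ, Matrix.transpose_apply]
    · linear_combination h11
    · linear_combination h1 - n * hQ10
    · linear_combination h1
    · linear_combination m * h1 + n * h2
end

section
/- Let F₀ ∈ ℂ[x₀,x₁,x₂,x₃] be a homogeneous polynomial of degree 3 such that the singular points of F₀ in ℂ⁴ ∖ {0} are exactly the nonzero scalar multiples of (1,0,0,0). Suppose moreover that the three affine plane curves defined by F₀(0,1,x₂,x₃) ∈ ℂ[x₂,x₃], F₀(0,x₁,1,x₃) ∈ ℂ[x₁,x₃], and F₀(0,x₁,x₂,1) ∈ ℂ[x₁,x₂] are all smooth. Let F = F₀ + x₀x₄² ∈ ℂ[x₀,x₁,x₂,x₃,x₄]. Then the singular points of F in ℂ⁵ ∖ {0} are exactly the nonzero scalar multiples of (1,0,0,0,0). -/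
open MvPolynomial

section Helpers

variable {σ : Type*} [Fintype σ] [DecidableEq σ]

set_option linter.unusedSectionVars false

lemma X_mul_pderiv_monomial (s : σ →₀ ℕ) (a : ℂ) (i : σ) :
    X i * pderiv i (monomial s a) = monomial s (a * s i) := by
  rw [pderiv_monomial]
  rcases Nat.eq_zero_or_pos (s i) with h | h
  · rw [h]; push_cast; rw [mul_zero]; simp
  · rw [X, monomial_mul, one_mul]
    have hs : Finsupp.single i 1 + (s - Finsupp.single i 1) = s := by
      ext j
      rw [Finsupp.add_apply, Finsupp.tsub_apply, Finsupp.single_apply]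
      split_ifs with hij
      · subst hij; omega
      · omega
    rw [hs]

lemma euler_eval {p : MvPolynomial σ ℂ} {n : ℕ} (hp : p.IsHomogeneous n) (z : σ → ℂ) :
    ∑ i, z i * eval z (pderiv i p) = n * eval z p := by
  have key : ∑ i : σ, X i * pderiv i p = (n : MvPolynomial σ ℂ) * p := by
    conv_lhs => rw [p.as_sum]
    conv_rhs => rw [p.as_sum]
    simp_rw [map_sum, Finset.mul_sum]
    rw [Finset.sum_comm]
    refine Finset.sum_congr rfl fun d hd => ?_
    simp_rw [_root_.X_mul_pderiv_monomial]
    have hdeg : ∑ i : σ, d i = n := by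
      have h1 := hp (mem_support_iff.mp hd)
      rw [Pi.one_def, ← Finsupp.degree_eq_weight_one] at h1
      rw [← h1, Finsupp.degree_apply]
      exact (Finset.sum_subset (Finset.subset_univ _)
        (fun x _ hx => Finsupp.notMem_support_iff.mp hx)).symm
    calc ∑ i : σ, (monomial d) (coeff d p * (d i : ℂ))
        = (monomial d) (coeff d p * (∑ i : σ, (d i : ℂ))) := by
          rw [Finset.mul_sum, map_sum]
      _ = _ := by
          rw [← Nat.cast_sum, hdeg, ← C_eq_coe_nat, C_mul_monomial, mul_comm]
  have := congrArg (eval z) key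
  simpa [Finset.mul_sum] using this

lemma pderiv_isHomogeneous {p : MvPolynomial σ ℂ} {n : ℕ} (hp : p.IsHomogeneous (n + 1)) (i : σ) :
    (pderiv i p).IsHomogeneous n := by
  conv_lhs => rw [p.as_sum]
  rw [map_sum]
  apply IsHomogeneous.sum
  intro d hd
  rw [pderiv_monomial]
  rcases Nat.eq_zero_or_pos (d i) with h | h
  · rw [h]; push_cast; rw [mul_zero, map_zero]
    exact isHomogeneous_zero σ ℂ n
  · apply isHomogeneous_monomial
    have h1 := hp (mem_support_iff.mp hd)
    rw [Pi.one_def, ← Finsupp.degree_eq_weight_one] at h1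
    have hle : Finsupp.single i 1 ≤ d := by
      intro j
      rcases eq_or_ne j i with rfl | hj
      · simp [Finsupp.single_apply]; omega
      · simp [Finsupp.single_apply, hj.symm]
    have hd2 : d - Finsupp.single i 1 + Finsupp.single i 1 = d := tsub_add_cancel_of_le hle
    have hsdeg : (Finsupp.single i 1).degree = 1 := by
      simp [Finsupp.degree_apply, Finsupp.support_single_ne_zero]
    have hadd : (d - Finsupp.single i 1).degree + (Finsupp.single i 1).degree = d.degree := by
      simp_rw [Finsupp.degree_eq_weight_one]
      rw [← map_add, hd2]
    omega

lemma eval_smul_of_isHomogeneous {p : MvPolynomial σ ℂ} {n : ℕ}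
    (hp : p.IsHomogeneous n) (c : ℂ) (z : σ → ℂ) :
    eval (fun i => c * z i) p = c ^ n * eval z p := by
  rw [eval_eq', eval_eq', Finset.mul_sum]
  refine Finset.sum_congr rfl fun d hd => ?_
  have hdeg : ∑ i : σ, d i = n := by
    have h1 := hp (mem_support_iff.mp hd)
    rw [Pi.one_def, ← Finsupp.degree_eq_weight_one] at h1
    rw [← h1, Finsupp.degree_apply]
    exact (Finset.sum_subset (Finset.subset_univ _)
      (fun x _ hx => Finsupp.notMem_support_iff.mp hx)).symm
  simp_rw [mul_pow]
  rw [Finset.prod_mul_distrib, Finset.prod_pow_eq_pow_sum, hdeg]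
  ring

end Helpers


lemma eval_aeval_eq (g : Fin 2 → ℂ) (f : Fin 4 → MvPolynomial (Fin 2) ℂ)
    (q : MvPolynomial (Fin 4) ℂ) :
    eval g (aeval f q) = eval (fun j => eval g (f j)) q := by
  rw [aeval_def, algebraMap_eq]
  show eval₂ (RingHom.id ℂ) g (eval₂ C f q) = _
  rw [← eval₂_assoc]
  rfl

lemma pderiv_aeval_eq (f : Fin 4 → MvPolynomial (Fin 2) ℂ)
    (q : MvPolynomial (Fin 4) ℂ) (i : Fin 2) :
    pderiv i (aeval f q) = ∑ j, aeval f (pderiv j q) * pderiv i (f j) := by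
  induction q using MvPolynomial.induction_on with
  | C a => simp
  | add p q hp hq =>
      rw [map_add, map_add (pderiv i), hp, hq, ← Finset.sum_add_distrib]
      exact Finset.sum_congr rfl fun j _ => by
        simp only [map_add]; ring
  | mul_X p k hp =>
      rw [map_mul, aeval_X, pderiv_mul, hp]
      have key : ∀ j : Fin 4, aeval f (pderiv j (p * X k)) =
          aeval f (pderiv j p) * f k + if k = j then aeval f p else 0 := by
        intro j
        rw [pderiv_mul, pderiv_X, map_add, map_mul, aeval_X]
        congr 1
        rcases eq_or_ne k j with rfl | h
        · simp
        · simp [Pi.single_apply, h, Ne.symm h]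
      simp_rw [key, add_mul, Finset.sum_add_distrib, ite_mul, zero_mul,
        Finset.sum_ite_eq, Finset.mem_univ, if_true, Finset.sum_mul]
      rw [add_left_inj]
      exact Finset.sum_congr rfl fun j _ => by ring


/-- An affine plane curve defined by `g ∈ ℂ[u,v]` is smooth if there is no
point `p ∈ ℂ²` where `g` and both of its partial derivatives vanish. -/
def IsSmoothAffineCurve (g : MvPolynomial (Fin 2) ℂ) : Prop :=
  ¬ ∃ p : Fin 2 → ℂ,
    eval p g = 0 ∧ ∀ i : Fin 2, eval p (pderiv i g) = 0

/-- Stabilization lemma: if `F₀ ∈ ℂ[x₀,x₁,x₂,x₃]` is a homogeneous cubic whose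
singular points in `ℂ⁴ ∖ {0}` are exactly the nonzero multiples of
`(1,0,0,0)`, and the affine curves `F₀(0,1,x₂,x₃)`, `F₀(0,x₁,1,x₃)`,
`F₀(0,x₁,x₂,1)` are smooth, then the singular points of
`F = F₀ + x₀x₄² ∈ ℂ[x₀,…,x₄]` in `ℂ⁵ ∖ {0}` are exactly the nonzero multiples
of `(1,0,0,0,0)`. -/
theorem stabilization_unique_singularity
    (F₀ : MvPolynomial (Fin 4) ℂ) (hdeg : F₀.IsHomogeneous 3)
    (hsing : {z : Fin 4 → ℂ | z ≠ 0 ∧ ∀ i : Fin 4, eval z (pderiv i F₀) = 0} =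
      {z : Fin 4 → ℂ | ∃ c : ℂ, c ≠ 0 ∧
        z = c • fun j : Fin 4 => if j = 0 then (1 : ℂ) else 0})
    (hc1 : IsSmoothAffineCurve
      (aeval ![0, 1, X 0, X 1] F₀ : MvPolynomial (Fin 2) ℂ))
    (hc2 : IsSmoothAffineCurve
      (aeval ![0, X 0, 1, X 1] F₀ : MvPolynomial (Fin 2) ℂ))
    (hc3 : IsSmoothAffineCurve
      (aeval ![0, X 0, X 1, 1] F₀ : MvPolynomial (Fin 2) ℂ))
    (F : MvPolynomial (Fin 5) ℂ)
    (hF : F = rename Fin.castSucc F₀ + X 0 * X 4 ^ 2) :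
    {z : Fin 5 → ℂ | z ≠ 0 ∧ ∀ i : Fin 5, eval z (pderiv i F) = 0} =
      {z : Fin 5 → ℂ | ∃ c : ℂ, c ≠ 0 ∧
        z = c • fun j : Fin 5 => if j = 0 then (1 : ℂ) else 0} := by
  have hinj : Function.Injective (Fin.castSucc : Fin 4 → Fin 5) := Fin.castSucc_injective 4
  have h45 : ∀ i' : Fin 4, (4 : Fin 5) ≠ Fin.castSucc i' := by
    intro i' h
    have hv : (4 : Fin 5).val = (Fin.castSucc i').val := by rw [h]
    have : i'.val < 4 := i'.isLt
    simp [Fin.coe_castSucc] at hv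
    omega
  have hlast : (Fin.last 4) = (4 : Fin 5) := by decide
  have hpd : ∀ i : Fin 4, (pderiv i F₀).IsHomogeneous 2 := by
    intro i
    have h3 : F₀.IsHomogeneous (2 + 1) := hdeg
    exact pderiv_isHomogeneous h3 i
  have hd_cast : ∀ (i' : Fin 4) (z : Fin 5 → ℂ),
      eval z (pderiv (Fin.castSucc i') F) =
        eval (z ∘ Fin.castSucc) (pderiv i' F₀) + (if i' = 0 then z 4 ^ 2 else 0) := by
    intro i' z
    rw [hF, map_add, map_add, pderiv_rename hinj, eval_rename]
    congr 1
    rw [pderiv_mul, pderiv_pow, pderiv_X_of_ne (h45 i'), mul_zero, mul_zero, add_zero]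
    rcases eq_or_ne i' 0 with rfl | hne
    · rw [Fin.castSucc_zero, pderiv_X_self, if_pos rfl]
      simp
    · rw [pderiv_X_of_ne, if_neg hne]
      · simp
      · rw [← Fin.castSucc_zero]
        exact fun h => hne (hinj h).symm
  have hd_last : ∀ z : Fin 5 → ℂ,
      eval z (pderiv 4 F) = z 0 * (2 * z 4) := by
    intro z
    rw [hF, map_add, map_add]
    have h1 : pderiv (4 : Fin 5) (rename Fin.castSucc F₀) = 0 := by
      apply pderiv_eq_zero_of_notMem_vars
      intro hmem
      obtain ⟨j, -, hj⟩ := Finset.mem_image.mp (vars_rename _ _ hmem)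
      exact h45 j hj.symm
    rw [h1, map_zero, zero_add, pderiv_mul, pderiv_pow, pderiv_X_self,
      pderiv_X_of_ne (by decide : (0 : Fin 5) ≠ 4)]
    simp
  ext z
  simp only [Set.mem_setOf_eq]
  constructor
  · rintro ⟨hz, hd⟩
    have h4 := hd 4
    rw [hd_last] at h4
    have hA : ∀ i' : Fin 4, i' ≠ 0 → eval (z ∘ Fin.castSucc) (pderiv i' F₀) = 0 := by
      intro i' hi'
      have := hd (Fin.castSucc i')
      rwa [hd_cast, if_neg hi', add_zero] at this
    have hA0 : eval (z ∘ Fin.castSucc) (pderiv 0 F₀) + z 4 ^ 2 = 0 := by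
      have := hd (Fin.castSucc 0)
      rwa [hd_cast, if_pos rfl] at this
    rcases eq_or_ne (z 4) 0 with h4z | h4z
    · have hz' : (z ∘ Fin.castSucc) ≠ 0 := by
        intro h0
        apply hz
        funext i
        induction i using Fin.lastCases with
        | last => rw [hlast]; exact h4z
        | cast i' => exact congrFun h0 i'
      have hmem : (z ∘ Fin.castSucc) ∈
          {w : Fin 4 → ℂ | w ≠ 0 ∧ ∀ i, eval w (pderiv i F₀) = 0} := by
        refine ⟨hz', fun i => ?_⟩
        rcases eq_or_ne i 0 with rfl | hi
        · rw [h4z] at hA0; simpa using hA0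
        · exact hA i hi
      rw [hsing] at hmem
      obtain ⟨c, hc, hzc⟩ := hmem
      refine ⟨c, hc, ?_⟩
      funext i
      induction i using Fin.lastCases with
      | last =>
          rw [hlast]
          have : (4 : Fin 5) ≠ 0 := by decide
          simp [this, h4z]
      | cast i' =>
          have := congrFun hzc i'
          simp only [Function.comp_apply, Pi.smul_apply, smul_eq_mul] at this ⊢
          simp only [Fin.castSucc_eq_zero_iff]
          exact this
    · exfalso
      have hz0 : z 0 = 0 := by
        rcases mul_eq_zero.mp h4 with h | h
        · exact h
        · exfalso
          rcases mul_eq_zero.mp h with h2 | h2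
          · exact two_ne_zero h2
          · exact h4z h2
      set z' := z ∘ Fin.castSucc with hz'def
      have hz'0 : z' 0 = 0 := by
        show z (Fin.castSucc 0) = 0
        rw [Fin.castSucc_zero]; exact hz0
      have hA0' : eval z' (pderiv 0 F₀) = -(z 4 ^ 2) := by
        have := hA0
        linear_combination this
      have hF0 : eval z' F₀ = 0 := by
        have heuler := euler_eval hdeg z'
        have hsum : ∑ i, z' i * eval z' (pderiv i F₀) = 0 := by
          apply Finset.sum_eq_zero
          intro i _
          rcases eq_or_ne i 0 with rfl | hi
          · rw [hz'0, zero_mul]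
          · rw [hA i hi, mul_zero]
        rw [hsum] at heuler
        have h3 : ((3 : ℕ) : ℂ) ≠ 0 := by norm_num
        exact (mul_eq_zero.mp heuler.symm).resolve_left h3
      have hex : z' 1 ≠ 0 ∨ z' 2 ≠ 0 ∨ z' 3 ≠ 0 := by
        by_contra hcon
        push_neg at hcon
        obtain ⟨h1, h2, h3⟩ := hcon
        have hzz : z' = 0 := by
          funext i
          fin_cases i
          · exact hz'0
          · exact h1
          · exact h2
          · exact h3
        rw [hzz] at hA0'
        rw [eval_zero] at hA0'
        have hcc : constantCoeff (pderiv (0 : Fin 4) F₀) = 0 := by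
          have := (hpd 0).coeff_eq_zero (d := 0) (by simp [map_zero])
          rwa [← constantCoeff_eq] at this
        rw [hcc] at hA0'
        have : z 4 ^ 2 = 0 := by linear_combination hA0'
        exact h4z (pow_eq_zero_iff (by norm_num) |>.mp this)
      -- common data for the three cases
      have main : ∀ j : Fin 4, z' j ≠ 0 → ∃ w : Fin 4 → ℂ,
          w 0 = 0 ∧ w j = 1 ∧ eval w F₀ = 0 ∧
          (∀ i : Fin 4, i ≠ 0 → eval w (pderiv i F₀) = 0) := by
        intro j hj
        refine ⟨fun k => (z' j)⁻¹ * z' k, ?_, ?_, ?_, ?_⟩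
        · show (z' j)⁻¹ * z' 0 = 0
          rw [hz'0, mul_zero]
        · exact inv_mul_cancel₀ hj
        · rw [eval_smul_of_isHomogeneous hdeg, hF0, mul_zero]
        · intro i hi
          rw [eval_smul_of_isHomogeneous (hpd i), hA i hi, mul_zero]
      rcases hex with hj | hj | hj
      · obtain ⟨w, hw0, hw1, hwF, hwD⟩ := main 1 hj
        apply hc1
        refine ⟨![w 2, w 3], ?_, ?_⟩
        · rw [eval_aeval_eq]
          have e1 : (fun k : Fin 4 =>
              eval ![w 2, w 3] ((![0, 1, X 0, X 1] : Fin 4 → MvPolynomial (Fin 2) ℂ) k)) = w := by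
            funext k
            fin_cases k <;> simp [hw0.symm, hw1.symm]
          rw [e1, hwF]
        · intro i
          rw [pderiv_aeval_eq, map_sum]
          apply Finset.sum_eq_zero
          intro j' _
          rw [eval_mul, eval_aeval_eq]
          have e1 : (fun k : Fin 4 =>
              eval ![w 2, w 3] ((![0, 1, X 0, X 1] : Fin 4 → MvPolynomial (Fin 2) ℂ) k)) = w := by
            funext k
            fin_cases k <;> simp [hw0.symm, hw1.symm]
          rw [e1]
          fin_cases j'
          · simp
          · simp
          · exact mul_eq_zero_of_left (hwD 2 (by decide)) _
          · exact mul_eq_zero_of_left (hwD 3 (by decide)) _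
      · obtain ⟨w, hw0, hw1, hwF, hwD⟩ := main 2 hj
        apply hc2
        refine ⟨![w 1, w 3], ?_, ?_⟩
        · rw [eval_aeval_eq]
          have e1 : (fun k : Fin 4 =>
              eval ![w 1, w 3] ((![0, X 0, 1, X 1] : Fin 4 → MvPolynomial (Fin 2) ℂ) k)) = w := by
            funext k
            fin_cases k <;> simp [hw0.symm, hw1.symm]
          rw [e1, hwF]
        · intro i
          rw [pderiv_aeval_eq, map_sum]
          apply Finset.sum_eq_zero
          intro j' _
          rw [eval_mul, eval_aeval_eq]
          have e1 : (fun k : Fin 4 =>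
              eval ![w 1, w 3] ((![0, X 0, 1, X 1] : Fin 4 → MvPolynomial (Fin 2) ℂ) k)) = w := by
            funext k
            fin_cases k <;> simp [hw0.symm, hw1.symm]
          rw [e1]
          fin_cases j'
          · simp
          · exact mul_eq_zero_of_left (hwD 1 (by decide)) _
          · simp
          · exact mul_eq_zero_of_left (hwD 3 (by decide)) _
      · obtain ⟨w, hw0, hw1, hwF, hwD⟩ := main 3 hj
        apply hc3
        refine ⟨![w 1, w 2], ?_, ?_⟩
        · rw [eval_aeval_eq]
          have e1 : (fun k : Fin 4 =>
              eval ![w 1, w 2] ((![0, X 0, X 1, 1] : Fin 4 → MvPolynomial (Fin 2) ℂ) k)) = w := by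
            funext k
            fin_cases k <;> simp [hw0.symm, hw1.symm]
          rw [e1, hwF]
        · intro i
          rw [pderiv_aeval_eq, map_sum]
          apply Finset.sum_eq_zero
          intro j' _
          rw [eval_mul, eval_aeval_eq]
          have e1 : (fun k : Fin 4 =>
              eval ![w 1, w 2] ((![0, X 0, X 1, 1] : Fin 4 → MvPolynomial (Fin 2) ℂ) k)) = w := by
            funext k
            fin_cases k <;> simp [hw0.symm, hw1.symm]
          rw [e1]
          fin_cases j'
          · simp
          · exact mul_eq_zero_of_left (hwD 1 (by decide)) _
          · exact mul_eq_zero_of_left (hwD 2 (by decide)) _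
          · simp
  · rintro ⟨c, hc, rfl⟩
    set z : Fin 5 → ℂ := c • fun j : Fin 5 => if j = 0 then (1 : ℂ) else 0 with hzdef
    have hz4 : z 4 = 0 := by
      simp [hzdef, (by decide : (4 : Fin 5) ≠ 0)]
    have hz0 : z 0 = c := by simp [hzdef]
    have hmem : (c • fun j : Fin 4 => if j = 0 then (1 : ℂ) else 0) ∈
        {w : Fin 4 → ℂ | w ≠ 0 ∧ ∀ i, eval w (pderiv i F₀) = 0} := by
      rw [hsing]; exact ⟨c, hc, rfl⟩
    obtain ⟨-, hder4⟩ := hmem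
    have hcomp : z ∘ Fin.castSucc = (c • fun j : Fin 4 => if j = 0 then (1 : ℂ) else 0) := by
      funext j
      simp [hzdef, Function.comp, Fin.castSucc_eq_zero_iff]
    constructor
    · intro h
      apply hc
      have := congrFun h 0
      simpa [hzdef] using this
    · intro i
      induction i using Fin.lastCases with
      | last =>
          rw [hlast, hd_last, hz4]
          ring
      | cast i' =>
          rw [hd_cast, hcomp, hder4 i', hz4]
          simp
end

section
/- Let a, b ∈ ℂ be nonzero and let F₀ = x₀x₁x₂ + x₁x₃(x₁ + a·x₃) + b·x₂³ ∈ ℂ[x₀,x₁,x₂,x₃]. Then the three affine plane curves defined by F₀(0,1,x₂,x₃) = x₃(1 + a·x₃) + b·x₂³ ∈ ℂ[x₂,x₃], F₀(0,x₁,1,x₃) = x₁x₃(x₁ + a·x₃) + b ∈ ℂ[x₁,x₃], and F₀(0,x₁,x₂,1) = x₁(x₁ + a) + b·x₂³ ∈ ℂ[x₁,x₂] are all smooth. -/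
open MvPolynomial

/-- For `F₀ = x₀x₁x₂ + x₁x₃(x₁ + a x₃) + b x₂³` with `a, b ≠ 0`, the three
affine plane curves `F₀(0,1,x₂,x₃) = x₃(1 + a x₃) + b x₂³`,
`F₀(0,x₁,1,x₃) = x₁x₃(x₁ + a x₃) + b`, `F₀(0,x₁,x₂,1) = x₁(x₁ + a) + b x₂³`
are all smooth.  (Variables `u, v` are `X 0, X 1` in each case.) -/
theorem cubic_family_one_smooth_sections (a b : ℂ) (ha : a ≠ 0) (hb : b ≠ 0) :
    IsSmoothAffineCurve
      (X 1 * (1 + C a * X 1) + C b * X 0 ^ 3 : MvPolynomial (Fin 2) ℂ) ∧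
    IsSmoothAffineCurve
      (X 0 * X 1 * (X 0 + C a * X 1) + C b : MvPolynomial (Fin 2) ℂ) ∧
    IsSmoothAffineCurve
      (X 0 * (X 0 + C a) + C b * X 1 ^ 3 : MvPolynomial (Fin 2) ℂ) := by
  refine ⟨?_, ?_, ?_⟩
  · rintro ⟨p, h0, hd⟩
    have h1 := hd 0
    have h2 := hd 1
    simp only [map_add, map_mul, map_one, map_pow, pderiv_mul, pderiv_X, pderiv_C, pderiv_pow,
      Derivation.map_one_eq_zero, eval_add, eval_mul, eval_X, eval_C, eval_pow,
      Pi.single_eq_same, Pi.single_eq_of_ne (by decide : (1:Fin 2) ≠ 0),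
      Pi.single_eq_of_ne (by decide : (0:Fin 2) ≠ 1), map_zero, mul_zero, zero_mul, mul_one,
      one_mul, add_zero, zero_add, map_ofNat, Nat.cast_ofNat,
      (show (3:ℕ)-1 = 2 from rfl)] at h0 h1 h2
    have key : (1:ℂ) = 0 := by
      linear_combination (1 + a * p 1 + p 1 * a) * h2 - 4 * a * h0 + (4 * a / 3) * p 0 * h1
    exact one_ne_zero key
  · rintro ⟨p, h0, hd⟩
    have h1 := hd 0
    have h2 := hd 1
    simp only [map_add, map_mul, map_one, map_pow, pderiv_mul, pderiv_X, pderiv_C, pderiv_pow,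
      Derivation.map_one_eq_zero, eval_add, eval_mul, eval_X, eval_C, eval_pow,
      Pi.single_eq_same, Pi.single_eq_of_ne (by decide : (1:Fin 2) ≠ 0),
      Pi.single_eq_of_ne (by decide : (0:Fin 2) ≠ 1), map_zero, mul_zero, zero_mul, mul_one,
      one_mul, add_zero, zero_add, map_ofNat, Nat.cast_ofNat,
      (show (3:ℕ)-1 = 2 from rfl)] at h0 h1 h2
    have key : b = 0 := by
      linear_combination h0 - (p 0 / 3) * h1 - (p 1 / 3) * h2
    exact hb key
  · rintro ⟨p, h0, hd⟩
    have h1 := hd 0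
    have h2 := hd 1
    simp only [map_add, map_mul, map_one, map_pow, pderiv_mul, pderiv_X, pderiv_C, pderiv_pow,
      Derivation.map_one_eq_zero, eval_add, eval_mul, eval_X, eval_C, eval_pow,
      Pi.single_eq_same, Pi.single_eq_of_ne (by decide : (1:Fin 2) ≠ 0),
      Pi.single_eq_of_ne (by decide : (0:Fin 2) ≠ 1), map_zero, mul_zero, zero_mul, mul_one,
      one_mul, add_zero, zero_add, map_ofNat, Nat.cast_ofNat,
      (show (3:ℕ)-1 = 2 from rfl)] at h0 h1 h2
    have key : a ^ 2 = 0 := by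
      linear_combination (p 0 + a + p 0) * h1 - 4 * h0 + (4 / 3) * p 1 * h2
    exact ha (pow_eq_zero_iff (two_ne_zero) |>.mp key)
end

section
/- Let a, b ∈ ℂ be nonzero and let F = x₀(x₄² + x₁x₂) + x₁x₃(x₁ + a·x₃) + b·x₂³ ∈ ℂ[x₀,x₁,x₂,x₃,x₄]. Then the set of points z ∈ ℂ⁵ ∖ {0} at which all five partial derivatives of F vanish is exactly the set of nonzero scalar multiples of (1,0,0,0,0). -/
open MvPolynomial

/-- For the cubic `F = x₀(x₄² + x₁x₂) + x₁x₃(x₁ + a x₃) + b x₂³` with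
`a, b ≠ 0`, the points of `ℂ⁵ ∖ {0}` where all five partial derivatives of `F`
vanish are exactly the nonzero scalar multiples of `(1,0,0,0,0)`. -/
theorem cubic_family_one_unique_singularity (a b : ℂ) (ha : a ≠ 0)
    (hb : b ≠ 0) (F : MvPolynomial (Fin 5) ℂ)
    (hF : F = X 0 * (X 4 ^ 2 + X 1 * X 2) + X 1 * X 3 * (X 1 + C a * X 3) +
      C b * X 2 ^ 3) :
    {z : Fin 5 → ℂ | z ≠ 0 ∧ ∀ i : Fin 5, eval z (pderiv i F) = 0} =
      {z : Fin 5 → ℂ | ∃ c : ℂ, c ≠ 0 ∧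
        z = c • fun j : Fin 5 => if j = 0 then (1 : ℂ) else 0} := by
  ext z
  simp only [Set.mem_setOf_eq]
  constructor
  · rintro ⟨hz, h⟩
    have h0 := h 0; have h1 := h 1; have h2 := h 2; have h3 := h 3; have h4 := h 4
    simp only [hF, map_add, map_mul, pderiv_mul, pderiv_pow, pderiv_X_self, pderiv_X_of_ne,
      pderiv_C, pderiv_X, Pi.single_apply, map_pow, eval_X, eval_C, map_ofNat, map_one, map_zero,
      smul_eq_mul, Fin.reduceEq, if_true, if_false, ite_true, ite_false, Fin.isValue,
      reduceIte] at h0 h1 h2 h3 h4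
    ring_nf at h0 h1 h2 h3 h4
    simp only [eval_ofNat] at h2 h4
    -- h0 : z 4 ^ 2 + z 1 * z 2 = 0
    -- h1 : z 1 * z 3 * 2 + z 2 * z 0 + z 3 ^ 2 * a = 0
    -- h2 : z 1 * z 0 + z 2 ^ 2 * b * 3 = 0
    -- h3 : z 1 * z 3 * a * 2 + z 1 ^ 2 = 0
    -- h4 : z 4 * z 0 * 2 = 0
    have hz1 : z 1 = 0 := by
      by_contra h1ne
      have hfac : z 1 * (z 1 + 2 * a * z 3) = 0 := by linear_combination h3
      have heq : z 1 + 2 * a * z 3 = 0 := by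
        rcases mul_eq_zero.mp hfac with h' | h'
        · exact absurd h' h1ne
        · exact h'
      have hz3 : z 3 ≠ 0 := by
        intro h'
        apply h1ne
        have := heq
        rw [h'] at this
        linear_combination this
      have hz0z2 : z 0 * z 2 = 3 * a * z 3 ^ 2 := by
        linear_combination h1 - 2 * z 3 * heq
      have hrhs : (3 : ℂ) * a * z 3 ^ 2 ≠ 0 := by
        apply mul_ne_zero (mul_ne_zero (by norm_num) ha) (pow_ne_zero _ hz3)
      have hz0 : z 0 ≠ 0 := fun h' => hrhs (by rw [← hz0z2, h', zero_mul])
      have hz2 : z 2 ≠ 0 := fun h' => hrhs (by rw [← hz0z2, h', mul_zero])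
      have hz4 : z 4 = 0 := by
        rcases mul_eq_zero.mp (show z 4 * z 0 = 0 by linear_combination h4/2) with h' | h'
        · exact h'
        · exact absurd h' hz0
      have : z 1 * z 2 = 0 := by rw [hz4] at h0; linear_combination h0
      rcases mul_eq_zero.mp this with h' | h'
      · exact h1ne h'
      · exact hz2 h'
    have hz2 : z 2 = 0 := by
      rw [hz1] at h2
      have hsq : z 2 ^ 2 * (b * 3) = 0 := by linear_combination h2
      have h3b : b * 3 ≠ 0 := mul_ne_zero hb (by norm_num)
      have : z 2 ^ 2 = 0 := (mul_eq_zero.mp hsq).resolve_right h3b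
      exact pow_eq_zero_iff (by norm_num) |>.mp this
    have hz3 : z 3 = 0 := by
      rw [hz1, hz2] at h1
      have : z 3 ^ 2 * a = 0 := by linear_combination h1
      rcases mul_eq_zero.mp this with h' | h'
      · exact pow_eq_zero_iff (by norm_num) |>.mp h'
      · exact absurd h' ha
    have hz4 : z 4 = 0 := by
      rw [hz1] at h0
      have : z 4 ^ 2 = 0 := by linear_combination h0
      exact pow_eq_zero_iff (by norm_num) |>.mp this
    have hz0 : z 0 ≠ 0 := by
      intro h'
      apply hz
      funext i
      fin_cases i <;> simp [h', hz1, hz2, hz3, hz4]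
    refine ⟨z 0, hz0, funext fun j => ?_⟩
    fin_cases j <;> simp [hz1, hz2, hz3, hz4]
  · rintro ⟨c, hc, rfl⟩
    constructor
    · intro h'
      apply hc
      have := congrFun h' 0
      simpa using this
    · intro i
      fin_cases i <;>
        simp [hF, pderiv_mul, pderiv_pow, pderiv_X_self, pderiv_X_of_ne, pderiv_X,
          Pi.single_apply, Pi.smul_apply, smul_eq_mul]
end

section
/- Let a, b ∈ ℂ be nonzero and let F = x₀(x₂² − x₁x₃) + a·x₁³ + b·x₃³ + x₁x₄² ∈ ℂ[x₀,x₁,x₂,x₃,x₄]. Then the set of points z ∈ ℂ⁵ ∖ {0} at which all five partial derivatives of F vanish is exactly the set of nonzero scalar multiples of (1,0,0,0,0). -/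
open MvPolynomial

/-- For the cubic `F = x₀(x₂² − x₁x₃) + a x₁³ + b x₃³ + x₁x₄²` with
`a, b ≠ 0`, the points of `ℂ⁵ ∖ {0}` where all five partial derivatives of `F`
vanish are exactly the nonzero scalar multiples of `(1,0,0,0,0)`. -/
theorem cubic_family_two_unique_singularity (a b : ℂ) (ha : a ≠ 0)
    (hb : b ≠ 0) (F : MvPolynomial (Fin 5) ℂ)
    (hF : F = X 0 * (X 2 ^ 2 - X 1 * X 3) + C a * X 1 ^ 3 + C b * X 3 ^ 3 +
      X 1 * X 4 ^ 2) :
    {z : Fin 5 → ℂ | z ≠ 0 ∧ ∀ i : Fin 5, eval z (pderiv i F) = 0} =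
      {z : Fin 5 → ℂ | ∃ c : ℂ, c ≠ 0 ∧
        z = c • fun j : Fin 5 => if j = 0 then (1 : ℂ) else 0} := by
  subst hF
  ext z
  simp only [Set.mem_setOf_eq]
  constructor
  · rintro ⟨hz, h⟩
    have h0 := h 0; have h1 := h 1; have h2 := h 2; have h3 := h 3; have h4 := h 4
    simp [pderiv_mul, pderiv_pow, pderiv_X, Pi.single_apply] at h0 h1 h2 h3 h4
    have hz1 : z 1 = 0 := by
      by_contra hz1
      have hz4 : z 4 = 0 := h4.resolve_left hz1
      have hz3z0 : z 3 = 0 ∧ z 0 = 0 := by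
        rcases h2 with h2 | h2
        · refine ⟨?_, h2⟩
          have : b * (3 * z 3 ^ 2) = 0 := by rw [h2] at h3; linear_combination h3
          have : z 3 ^ 2 = 0 := by
            rcases mul_eq_zero.1 this with h | h
            · exact absurd h hb
            · linear_combination h / 3
          exact pow_eq_zero_iff (n := 2) (by norm_num) |>.1 this
        · have hz3 : z 3 = 0 := by
            have := h0; rw [h2] at this
            have : z 1 * z 3 = 0 := by linear_combination -this
            exact (mul_eq_zero.1 this).resolve_left hz1
          have hz0 : z 0 = 0 := by
            rw [hz3] at h3
            have : z 0 * z 1 = 0 := by linear_combination -h3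
            exact (mul_eq_zero.1 this).resolve_right hz1
          exact ⟨hz3, hz0⟩
      obtain ⟨hz3, hz0⟩ := hz3z0
      rw [hz0, hz3, hz4] at h1
      have : a * (3 * z 1 ^ 2) = 0 := by linear_combination h1
      rcases mul_eq_zero.1 this with h | h
      · exact ha h
      · exact hz1 (pow_eq_zero_iff (n := 2) (by norm_num) |>.1 (by linear_combination h / 3))
    have hz3 : z 3 = 0 := by
      rw [hz1] at h3
      have : z 3 ^ 2 = 0 := by
        have hh : b * (3 * z 3 ^ 2) = 0 := by linear_combination h3
        rcases mul_eq_zero.1 hh with h | h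
        · exact absurd h hb
        · linear_combination h / 3
      exact pow_eq_zero_iff (n := 2) (by norm_num) |>.1 this
    have hz2 : z 2 = 0 := by
      rw [hz1] at h0
      have : z 2 ^ 2 = 0 := by linear_combination h0
      exact pow_eq_zero_iff (n := 2) (by norm_num) |>.1 this
    have hz4 : z 4 = 0 := by
      rw [hz1, hz3] at h1
      have : z 4 ^ 2 = 0 := by linear_combination h1
      exact pow_eq_zero_iff (n := 2) (by norm_num) |>.1 this
    have hz0 : z 0 ≠ 0 := by
      intro hz0
      apply hz
      funext j
      fin_cases j <;> simp [hz0, hz1, hz2, hz3, hz4]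
    exact ⟨z 0, hz0, by funext j; fin_cases j <;> simp [hz1, hz2, hz3, hz4]⟩
  · rintro ⟨c, hc, rfl⟩
    constructor
    · intro h
      apply hc
      have := congrFun h 0
      simpa using this
    · intro i
      fin_cases i <;>
        simp [pderiv_mul, pderiv_pow, pderiv_X, Pi.single_apply]
end
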